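/- There exists a constant A₂ > 0 such that for all integers m ≥ 2 and all integers ℓ with 1 ≤ ℓ ≤ m − 1, the binomial coefficient times the Beta value satisfies C(m, ℓ)·B(βℓ + 1, β(m−ℓ) + 1) ≤ (A₂/m)·(ℓ^ℓ·(m−ℓ)^{m−ℓ}/m^m)^{β−1}. -/

import Mathlib

open MeasureTheory Real Set
open scoped Nat
set_option maxHeartbeats 1000000

/-- The exponent `β = (√17 - 3)/2`, the positive root of `(β+1)(β+2) = 4`. -/
noncomputable def β : ℝ := (Real.sqrt 17 - 3) / 2

/-- The Beta function `B(a,b) = ∫₀¹ t^{a-1}(1-t)^{b-1} dt`. -/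
noncomputable def Bfun (a b : ℝ) : ℝ := ∫ t in (0:ℝ)..1, t ^ (a - 1) * (1 - t) ^ (b - 1)

lemma sqrt17_ge : (4:ℝ) ≤ Real.sqrt 17 := by
  nlinarith [Real.sq_sqrt (by norm_num : (0:ℝ) ≤ 17), Real.sqrt_nonneg 17]

lemma sqrt17_le : Real.sqrt 17 ≤ 5 := by
  nlinarith [Real.sq_sqrt (by norm_num : (0:ℝ) ≤ 17), Real.sqrt_nonneg 17]

lemma beta_ge : (1:ℝ)/2 ≤ β := by unfold β; linarith [sqrt17_ge]
lemma beta_le : β ≤ 1 := by unfold β; linarith [sqrt17_le]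
lemma beta_pos : 0 < β := lt_of_lt_of_le (by norm_num) beta_ge

lemma stirling_lower (n : ℕ) : Real.sqrt π ≤ Stirling.stirlingSeq (n+1) :=
  Stirling.stirlingSeq'_antitone.le_of_tendsto
    (Stirling.tendsto_stirlingSeq_sqrt_pi.comp (Filter.tendsto_add_atTop_nat 1)) n

lemma stirling_upper (n : ℕ) : Stirling.stirlingSeq (n+1) ≤ Real.exp 1 / Real.sqrt 2 := by
  simpa using Stirling.stirlingSeq'_antitone (Nat.zero_le n)

lemma fact_lower (n : ℕ) (hn : 1 ≤ n) :
    2 * Real.sqrt n * ((n:ℝ)/Real.exp 1)^n ≤ (n ! : ℝ) := by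
  obtain ⟨k, rfl⟩ := Nat.exists_eq_add_of_le hn
  have h := stirling_lower k
  rw [show 1 + k = k + 1 by ring] at *
  have hd : 0 < Real.sqrt (2*(k+1:ℕ) : ℝ) * (((k+1:ℕ):ℝ)/Real.exp 1)^(k+1) := by
    apply mul_pos (Real.sqrt_pos.2 (by positivity)) (pow_pos (by positivity) _)
  rw [Stirling.stirlingSeq, le_div_iff₀ hd] at h
  refine le_trans ?_ h
  have h2 : 2 * Real.sqrt ((k+1:ℕ):ℝ) ≤ Real.sqrt π * Real.sqrt (2*(k+1:ℕ) : ℝ) := by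
    rw [show (2*(k+1:ℕ) : ℝ) = 2 * ((k+1:ℕ):ℝ) by push_cast; ring,
      Real.sqrt_mul (by norm_num)]
    have : 2 ≤ Real.sqrt π * Real.sqrt 2 := by
      rw [← Real.sqrt_mul Real.pi_pos.le]
      nlinarith [Real.pi_gt_three, Real.sq_sqrt (by positivity : (0:ℝ) ≤ π * 2),
        Real.sqrt_nonneg (π*2)]
    nlinarith [Real.sqrt_nonneg ((k+1:ℕ):ℝ)]
  have hp : (0:ℝ) ≤ (((k+1:ℕ):ℝ)/Real.exp 1)^(k+1) := by positivity
  nlinarith [mul_le_mul_of_nonneg_right h2 hp]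

lemma fact_upper (n : ℕ) (hn : 1 ≤ n) :
    (n ! : ℝ) ≤ Real.exp 1 * Real.sqrt n * ((n:ℝ)/Real.exp 1)^n := by
  obtain ⟨k, rfl⟩ := Nat.exists_eq_add_of_le hn
  have h := stirling_upper k
  rw [show 1 + k = k + 1 by ring] at *
  have hd : 0 < Real.sqrt (2*(k+1:ℕ) : ℝ) * (((k+1:ℕ):ℝ)/Real.exp 1)^(k+1) := by
    apply mul_pos (Real.sqrt_pos.2 (by positivity)) (pow_pos (by positivity) _)
  rw [Stirling.stirlingSeq, div_le_iff₀ hd] at h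
  refine h.trans ?_
  have h2 : Real.exp 1 / Real.sqrt 2 * Real.sqrt (2*(k+1:ℕ) : ℝ)
      = Real.exp 1 * Real.sqrt ((k+1:ℕ):ℝ) := by
    rw [show (2*(k+1:ℕ) : ℝ) = 2 * ((k+1:ℕ):ℝ) by push_cast; ring,
      Real.sqrt_mul (by norm_num)]
    field_simp
  rw [← mul_assoc, h2]



lemma Bfun_eq {a b : ℝ} (ha : 0 < a) (hb : 0 < b) :
    Bfun a b = Real.Gamma a * Real.Gamma b / Real.Gamma (a + b) := by
  have hab : 0 < a + b := by linarith
  have hG : Real.Gamma (a + b) ≠ 0 := (Real.Gamma_pos_of_pos hab).ne'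
  have key : Complex.betaIntegral a b = (Bfun a b : ℂ) := by
    rw [Bfun, ← intervalIntegral.integral_ofReal, Complex.betaIntegral]
    apply intervalIntegral.integral_congr
    intro x hx
    rw [Set.uIcc_of_le (by norm_num : (0:ℝ) ≤ 1)] at hx
    obtain ⟨h0, h1⟩ := hx
    simp only [Complex.ofReal_mul]
    rw [Complex.ofReal_cpow h0, Complex.ofReal_cpow (by linarith : (0:ℝ) ≤ 1 - x)]
    push_cast
    ring
  have h2 := Complex.Gamma_mul_Gamma_eq_betaIntegral (s := a) (t := b)
    (by simpa using ha) (by simpa using hb)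
  rw [key] at h2
  have h3 : ((Real.Gamma a * Real.Gamma b : ℝ) : ℂ)
      = ((Real.Gamma (a + b) * Bfun a b : ℝ) : ℂ) := by
    push_cast
    rw [← Complex.Gamma_ofReal, ← Complex.Gamma_ofReal, ← Complex.Gamma_ofReal]
    rw [Complex.ofReal_add, ← h2]
  have h4 : Real.Gamma a * Real.Gamma b = Real.Gamma (a + b) * Bfun a b :=
    Complex.ofReal_inj.1 h3
  rw [eq_div_iff hG, h4]; ring

-- Γ x ≤ k! * (k+1)^(x-(k+1))  for x ∈ [k+1, k+2]
lemma Gamma_interp_upper (k : ℕ) {x : ℝ} (h1 : (k:ℝ) + 1 ≤ x) (h2 : x ≤ (k:ℝ) + 2) :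
    Real.Gamma x ≤ (k ! : ℝ) * ((k:ℝ) + 1) ^ (x - ((k:ℝ) + 1)) := by
  set t : ℝ := x - ((k:ℝ) + 1) with ht
  have ht0 : 0 ≤ t := by simp [ht]; linarith
  have ht1 : t ≤ 1 := by simp [ht]; linarith
  have hx0 : 0 < x := by linarith [Nat.cast_nonneg (α := ℝ) k]
  have hk1 : (0:ℝ) < (k:ℝ) + 1 := by positivity
  have hk2 : (0:ℝ) < (k:ℝ) + 2 := by positivity
  have hc := Real.convexOn_log_Gamma.2 (Set.mem_Ioi.2 hk1) (Set.mem_Ioi.2 hk2)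
    (by linarith : (0:ℝ) ≤ 1 - t) ht0 (by ring)
  simp only [smul_eq_mul, Function.comp_apply] at hc
  have hxe : (1 - t) * ((k:ℝ) + 1) + t * ((k:ℝ) + 2) = x := by rw [ht]; ring
  rw [hxe] at hc
  have hg1 : Real.Gamma ((k:ℝ) + 1) = (k ! : ℝ) := by
    exact_mod_cast Real.Gamma_nat_eq_factorial k
  have hg2 : Real.Gamma ((k:ℝ) + 2) = ((k+1)! : ℝ) := by
    have := Real.Gamma_nat_eq_factorial (k+1)
    push_cast at this ⊢
    rw [show ((k:ℝ)+2) = (k:ℝ)+1+1 by ring, this]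
  rw [hg1, hg2] at hc
  have hGx : 0 < Real.Gamma x := Real.Gamma_pos_of_pos hx0
  have hf1 : (0:ℝ) < (k ! : ℝ) := by positivity
  have hf2 : (0:ℝ) < ((k+1)! : ℝ) := by positivity
  calc Real.Gamma x = Real.exp (Real.log (Real.Gamma x)) := (Real.exp_log hGx).symm
    _ ≤ Real.exp ((1-t) * Real.log (k !) + t * Real.log ((k+1)!)) := Real.exp_le_exp.2 hc
    _ = (k ! : ℝ) * ((k:ℝ)+1) ^ t := by
        have : ((k+1)! : ℝ) = ((k:ℝ)+1) * (k ! : ℝ) := by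
          push_cast [Nat.factorial_succ]; ring
        rw [this, Real.log_mul (by positivity) (by positivity),          show (1-t) * Real.log (k !) + t * (Real.log ((k:ℝ)+1) + Real.log (k !))
            = Real.log (k !) + Real.log ((k:ℝ)+1) * t by ring,
          Real.exp_add, Real.exp_log hf1, ← Real.rpow_def_of_pos hk1]
    _ = (k ! : ℝ) * ((k:ℝ) + 1) ^ (x - ((k:ℝ) + 1)) := by rw [ht]

lemma Gamma_interp_lower (k : ℕ) {x : ℝ} (h1 : (k:ℝ) + 1 ≤ x) (h2 : x ≤ (k:ℝ) + 2) :
    ((k+1)! : ℝ) ≤ Real.Gamma x * x ^ ((k:ℝ) + 2 - x) := by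
  set s : ℝ := (k:ℝ) + 2 - x with hs
  have hs0 : 0 ≤ s := by simp [hs]; linarith
  have hs1 : s ≤ 1 := by simp [hs]; linarith
  have hx0 : 0 < x := by linarith [Nat.cast_nonneg (α := ℝ) k]
  have hx10 : 0 < x + 1 := by linarith
  have hc := Real.convexOn_log_Gamma.2 (Set.mem_Ioi.2 hx0) (Set.mem_Ioi.2 hx10)
    (by linarith : (0:ℝ) ≤ 1 - s) hs0 (by ring)
  simp only [smul_eq_mul, Function.comp_apply] at hc
  have hxe : (1 - s) * x + s * (x + 1) = (k:ℝ) + 2 := by rw [hs]; ring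
  rw [hxe] at hc
  have hg2 : Real.Gamma ((k:ℝ) + 2) = ((k+1)! : ℝ) := by
    have := Real.Gamma_nat_eq_factorial (k+1)
    push_cast at this ⊢
    rw [show ((k:ℝ)+2) = (k:ℝ)+1+1 by ring, this]
  have hGx : 0 < Real.Gamma x := Real.Gamma_pos_of_pos hx0
  have hG1 : Real.Gamma (x + 1) = x * Real.Gamma x := Real.Gamma_add_one hx0.ne'
  rw [hg2, hG1, Real.log_mul hx0.ne' hGx.ne'] at hc
  have hf2 : (0:ℝ) < ((k+1)! : ℝ) := by positivity
  calc ((k+1)! : ℝ) = Real.exp (Real.log ((k+1)! : ℝ)) := (Real.exp_log hf2).symm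
    _ ≤ Real.exp ((1-s) * Real.log (Real.Gamma x)
        + s * (Real.log x + Real.log (Real.Gamma x))) := Real.exp_le_exp.2 hc
    _ = Real.Gamma x * x ^ s := by
        rw [show (1-s) * Real.log (Real.Gamma x) + s * (Real.log x + Real.log (Real.Gamma x))
            = Real.log (Real.Gamma x) + Real.log x * s by ring,
          Real.exp_add, Real.exp_log hGx, ← Real.rpow_def_of_pos hx0]

lemma exp_half_le : Real.exp (1/2 : ℝ) ≤ 2 := by
  nlinarith [Real.exp_one_lt_d9, Real.exp_pos (1/2 : ℝ),
    (Real.exp_add (1/2) (1/2)).symm.trans (by norm_num : Real.exp ((1:ℝ)/2 + 1/2) = Real.exp 1)]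

lemma Gamma_upper {x : ℝ} (hx : 1 ≤ x) :
    Real.Gamma x ≤ Real.exp 2 * x ^ (x - 1/2) * Real.exp (-x) := by
  have hx0 : (0:ℝ) < x := by linarith
  have hfl : 1 ≤ ⌊x⌋₊ := Nat.le_floor (by exact_mod_cast hx)
  obtain ⟨k, hk⟩ := Nat.exists_eq_add_of_le hfl
  have hl : (k:ℝ) + 1 ≤ x := by
    have := Nat.floor_le hx0.le
    rw [hk] at this; push_cast at this; linarith
  have hu : x < (k:ℝ) + 2 := by
    have := Nat.lt_floor_add_one x
    rw [hk] at this; push_cast at this; linarith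
  set N : ℝ := (k:ℝ) + 1 with hN
  have hN0 : (0:ℝ) < N := by positivity
  have hNx : N ≤ x := hl
  have h := Gamma_interp_upper k hl hu.le
  have hfactu := fact_upper (k+1) (Nat.le_add_left 1 k)
  have hc1 : ((k+1:ℕ):ℝ) = N := by push_cast [hN]; ring
  rw [hc1] at hfactu
  have hsp : 0 < Real.sqrt N := Real.sqrt_pos.2 hN0
  have hP : (0:ℝ) < (N/Real.exp 1)^(k+1) := by positivity
  have hkfact : (k ! : ℝ) ≤ Real.exp 1 * (N/Real.exp 1)^(k+1) / Real.sqrt N := by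
    have hfs : ((k+1)! : ℝ) = N * (k ! : ℝ) := by push_cast [Nat.factorial_succ]; ring
    rw [hfs] at hfactu
    rw [le_div_iff₀ hsp, ← mul_le_mul_iff_of_pos_right hsp, mul_assoc, mul_assoc,
      Real.mul_self_sqrt hN0.le]
    nlinarith [hfactu, hsp.le, Real.mul_self_sqrt hN0.le]
  have e1 : (N/Real.exp 1)^(k+1) = N ^ (N:ℝ) * Real.exp (-N) := by
    rw [div_pow, ← Real.rpow_natCast N (k+1), ← Real.rpow_natCast (Real.exp 1) (k+1),
      Real.exp_one_rpow, hc1, Real.exp_neg]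
    ring
  have key : Real.exp 1 * (N/Real.exp 1)^(k+1) / Real.sqrt N * N ^ (x - N)
      = Real.exp 1 * N ^ (x - 1/2) * Real.exp (-N) := by
    rw [e1, Real.sqrt_eq_rpow]
    rw [show Real.exp 1 * (N ^ (N:ℝ) * Real.exp (-N)) / N ^ ((1:ℝ)/2) * N ^ (x - N)
        = Real.exp 1 * Real.exp (-N) * (N ^ (N:ℝ) * N ^ (x - N) / N ^ ((1:ℝ)/2)) by ring]
    rw [← Real.rpow_add hN0, ← Real.rpow_sub hN0]
    rw [show N + (x - N) - 1/2 = x - 1/2 by ring]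
    ring
  have hNpow : N ^ (x - 1/2) ≤ x ^ (x - 1/2) :=
    Real.rpow_le_rpow hN0.le hNx (by linarith)
  have hexp : Real.exp (-N) ≤ Real.exp 1 * Real.exp (-x) := by
    rw [← Real.exp_add]
    exact Real.exp_le_exp.2 (by linarith)
  calc Real.Gamma x ≤ (k ! : ℝ) * N ^ (x - N) := h
    _ ≤ (Real.exp 1 * (N/Real.exp 1)^(k+1) / Real.sqrt N) * N ^ (x - N) := by
        have : (0:ℝ) ≤ N ^ (x - N) := (Real.rpow_pos_of_pos hN0 _).le
        exact mul_le_mul_of_nonneg_right hkfact this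
    _ = Real.exp 1 * N ^ (x - 1/2) * Real.exp (-N) := key
    _ ≤ Real.exp 1 * x ^ (x - 1/2) * (Real.exp 1 * Real.exp (-x)) := by
        have h1 : (0:ℝ) < Real.exp 1 := Real.exp_pos 1
        have h2 : (0:ℝ) ≤ x ^ (x - 1/2) := (Real.rpow_pos_of_pos hx0 _).le
        have := mul_le_mul (mul_le_mul_of_nonneg_left hNpow h1.le) hexp
          (Real.exp_pos _).le (by positivity)
        linarith [this]
    _ = Real.exp 2 * x ^ (x - 1/2) * Real.exp (-x) := by
        rw [show (2:ℝ) = 1 + 1 by norm_num, Real.exp_add]; ring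

lemma Gamma_lower {x : ℝ} (hx : 1 ≤ x) :
    (1/2) * x ^ (x - 1/2) * Real.exp (-x) ≤ Real.Gamma x := by
  have hx0 : (0:ℝ) < x := by linarith
  have hfl : 1 ≤ ⌊x⌋₊ := Nat.le_floor (by exact_mod_cast hx)
  obtain ⟨k, hk⟩ := Nat.exists_eq_add_of_le hfl
  have hl : (k:ℝ) + 1 ≤ x := by
    have := Nat.floor_le hx0.le
    rw [hk] at this; push_cast at this; linarith
  have hu : x < (k:ℝ) + 2 := by
    have := Nat.lt_floor_add_one x
    rw [hk] at this; push_cast at this; linarith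
  set N : ℝ := (k:ℝ) + 1 with hN
  have hN0 : (0:ℝ) < N := by positivity
  have hN1 : (1:ℝ) ≤ N := by rw [hN]; linarith [Nat.cast_nonneg (α := ℝ) k]
  have hNx : N ≤ x := hl
  have h := Gamma_interp_lower k hl hu.le
  -- (k+1)! lower bound
  have hfactl := fact_lower (k+1) (Nat.le_add_left 1 k)
  have hc1 : ((k+1:ℕ):ℝ) = N := by push_cast [hN]; ring
  rw [hc1] at hfactl
  have e1 : (N/Real.exp 1)^(k+1) = N ^ (N:ℝ) * Real.exp (-N) := by
    rw [div_pow, ← Real.rpow_natCast N (k+1), ← Real.rpow_natCast (Real.exp 1) (k+1),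
      Real.exp_one_rpow, hc1, Real.exp_neg]
    ring
  rw [e1] at hfactl
  -- key comparison : (1/2) x^(x-1/2) e^(-x) * x^(N+1-x) ≤ 2 √N N^N e^(-N)
  have hxpowpos : (0:ℝ) < x ^ ((k:ℝ) + 2 - x) := Real.rpow_pos_of_pos hx0 _
  have hkey : (1/2) * x ^ (x - 1/2) * Real.exp (-x) * x ^ ((k:ℝ) + 2 - x)
      ≤ 2 * Real.sqrt N * (N ^ (N:ℝ) * Real.exp (-N)) := by
    have hcomb : x ^ (x - 1/2) * x ^ ((k:ℝ) + 2 - x) = x ^ (N + 1/2) := by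
      rw [← Real.rpow_add hx0, hN]; ring_nf
    -- x^(N+1/2) ≤ N^(N+1/2) * exp((x-N)/N * (N+1/2))
    have hxN : x ≤ N * Real.exp ((x - N)/N) := by
      have h1 := Real.add_one_le_exp ((x - N)/N)
      have h2 : ((x - N)/N + 1) * N ≤ Real.exp ((x - N)/N) * N :=
        mul_le_mul_of_nonneg_right h1 hN0.le
      have h3 : ((x - N)/N + 1) * N = x := by field_simp; ring
      linarith
    have hrp : x ^ (N + 1/2) ≤ (N * Real.exp ((x - N)/N)) ^ (N + 1/2) :=
      Real.rpow_le_rpow hx0.le hxN (by linarith)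
    have hsplit : (N * Real.exp ((x - N)/N)) ^ (N + 1/2)
        = N ^ (N + 1/2) * Real.exp ((x - N)/N * (N + 1/2)) := by
      rw [Real.mul_rpow hN0.le (Real.exp_pos _).le, ← Real.exp_mul]
    have hexparg : (x - N)/N * (N + 1/2) ≤ (x - N) + 1/2 := by
      have hxN1 : x - N ≤ 1 := by linarith
      have hxN0 : 0 ≤ x - N := by linarith
      rw [div_mul_eq_mul_div, div_le_iff₀ hN0]
      nlinarith
    have hexp2 : Real.exp ((x - N)/N * (N + 1/2)) ≤ Real.exp (x - N) * 2 := by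
      calc Real.exp ((x - N)/N * (N + 1/2)) ≤ Real.exp ((x - N) + 1/2) :=
            Real.exp_le_exp.2 hexparg
        _ = Real.exp (x - N) * Real.exp (1/2) := Real.exp_add _ _
        _ ≤ Real.exp (x - N) * 2 :=
            mul_le_mul_of_nonneg_left exp_half_le (Real.exp_pos _).le
    have hNsplit : N ^ (N + 1/2) = N ^ (N:ℝ) * Real.sqrt N := by
      rw [Real.rpow_add hN0, Real.sqrt_eq_rpow]
    calc (1/2) * x ^ (x - 1/2) * Real.exp (-x) * x ^ ((k:ℝ) + 2 - x)
        = (1/2) * Real.exp (-x) * x ^ (N + 1/2) := by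
          rw [← hcomb]; ring
      _ ≤ (1/2) * Real.exp (-x) * (N ^ (N + 1/2) * Real.exp ((x - N)/N * (N + 1/2))) := by
          have := mul_le_mul_of_nonneg_left (hrp.trans_eq hsplit)
            (by positivity : (0:ℝ) ≤ (1/2) * Real.exp (-x))
          linarith
      _ ≤ (1/2) * Real.exp (-x) * (N ^ (N + 1/2) * (Real.exp (x - N) * 2)) := by
          have := mul_le_mul_of_nonneg_left hexp2
            (Real.rpow_pos_of_pos hN0 (N + 1/2)).le
          have := mul_le_mul_of_nonneg_left this
            (by positivity : (0:ℝ) ≤ (1/2) * Real.exp (-x))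
          linarith
      _ = N ^ (N + 1/2) * (Real.exp (-x) * Real.exp (x - N)) := by ring
      _ = 2 * Real.sqrt N * (N ^ (N:ℝ) * Real.exp (-N)) * (1/2) := by
          rw [← Real.exp_add, show -x + (x - N) = -N by ring, hNsplit]; ring
      _ ≤ 2 * Real.sqrt N * (N ^ (N:ℝ) * Real.exp (-N)) := by
          have : (0:ℝ) ≤ 2 * Real.sqrt N * (N ^ (N:ℝ) * Real.exp (-N)) := by positivity
          linarith
  have hchain : (1/2) * x ^ (x - 1/2) * Real.exp (-x) * x ^ ((k:ℝ) + 2 - x)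
      ≤ Real.Gamma x * x ^ ((k:ℝ) + 2 - x) := le_trans hkey (hfactl.trans h)
  exact le_of_mul_le_mul_right hchain hxpowpos

lemma rpow_add_one_le {u : ℝ} (hu : 0 < u) : (u+1) ^ (u:ℝ) ≤ Real.exp 1 * u ^ (u:ℝ) := by
  have h1 : u + 1 ≤ u * Real.exp (1/u) := by
    have := Real.add_one_le_exp (1/u)
    have h2 := mul_le_mul_of_nonneg_left this hu.le
    calc u + 1 = u * (1/u + 1) := by field_simp; ring
      _ ≤ u * Real.exp (1/u) := h2
  calc (u+1) ^ (u:ℝ) ≤ (u * Real.exp (1/u)) ^ (u:ℝ) :=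
        Real.rpow_le_rpow (by linarith) h1 hu.le
    _ = u ^ (u:ℝ) * Real.exp (1/u) ^ (u:ℝ) := Real.mul_rpow hu.le (Real.exp_pos _).le
    _ = u ^ (u:ℝ) * Real.exp 1 := by
        congr 1
        rw [← Real.exp_mul, one_div, inv_mul_cancel₀ hu.ne']
    _ = Real.exp 1 * u ^ (u:ℝ) := by ring

lemma Bfun_bound {L K : ℝ} (hL1 : 1 ≤ L) (hK1 : 1 ≤ K) :
    Bfun (β*L+1) (β*K+1) ≤ 12 * Real.exp 6 * ((L ^ L * K ^ K / (L+K) ^ (L+K)) ^ β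
      * (Real.sqrt L * Real.sqrt K) / (L+K) ^ ((3:ℝ)/2)) := by
  have hb := beta_pos
  have hbl := beta_le
  have hbg := beta_ge
  have hL0 : (0:ℝ) < L := by linarith
  have hK0 : (0:ℝ) < K := by linarith
  set M : ℝ := L + K with hM
  have hM0 : (0:ℝ) < M := by positivity
  set u : ℝ := β * L with hu
  set v : ℝ := β * K with hv
  set w : ℝ := β * M with hw
  have hu0 : 0 < u := by positivity
  have hv0 : 0 < v := by positivity
  have hw0 : 0 < w := by positivity
  have huv : u + v = w := by rw [hu, hv, hw, hM]; ring
  set a : ℝ := u + 1 with ha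
  set b : ℝ := v + 1 with hb'
  have ha1 : 1 ≤ a := by linarith
  have hb1 : 1 ≤ b := by linarith
  have ha0 : 0 < a := by linarith
  have hb0 : 0 < b := by linarith
  have hab : a + b = w + 2 := by rw [ha, hb']; linarith
  have hab1 : 1 ≤ a + b := by linarith
  have hBf : Bfun a b = Real.Gamma a * Real.Gamma b / Real.Gamma (a+b) :=
    Bfun_eq ha0 hb0
  -- step 1
  set A : ℝ := a ^ (a - 1/2) with hA
  set B : ℝ := b ^ (b - 1/2) with hB
  set C : ℝ := (a+b) ^ (a+b - 1/2) with hC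
  have hApos : 0 < A := Real.rpow_pos_of_pos ha0 _
  have hBpos : 0 < B := Real.rpow_pos_of_pos hb0 _
  have hCpos : 0 < C := Real.rpow_pos_of_pos (by linarith) _
  have step1 : Bfun a b ≤ 2 * Real.exp 4 * (A * B / C) := by
    rw [hBf]
    have h1 := Gamma_upper ha1
    have h2 := Gamma_upper hb1
    have h3 := Gamma_lower hab1
    have hdenpos : 0 < (1/2) * C * Real.exp (-(a+b)) := by positivity
    have hnum : Real.Gamma a * Real.Gamma b
        ≤ (Real.exp 2 * A * Real.exp (-a)) * (Real.exp 2 * B * Real.exp (-b)) :=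
      mul_le_mul h1 h2 (Real.Gamma_pos_of_pos hb0).le (by positivity)
    have hdiv := div_le_div₀ (by positivity) hnum hdenpos h3
    refine hdiv.trans_eq ?_
    have he : Real.exp (-a) * Real.exp (-b) = Real.exp (-(a+b)) := by
      rw [← Real.exp_add]; ring_nf
    have he4 : Real.exp 2 * Real.exp 2 = Real.exp 4 := by
      rw [← Real.exp_add]; norm_num
    have hnum_eq : (Real.exp 2 * A * Real.exp (-a)) * (Real.exp 2 * B * Real.exp (-b))
        = Real.exp 4 * (A * B) * Real.exp (-(a+b)) := by
      rw [← he, ← he4]; ring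
    rw [hnum_eq]
    have hE : Real.exp (-(a+b)) ≠ 0 := (Real.exp_pos _).ne'
    field_simp
  -- step 2 : A ≤ e u^u √a etc.
  have hAle : A ≤ Real.exp 1 * u ^ (u:ℝ) * Real.sqrt a := by
    have h1 : A = (u+1) ^ (u:ℝ) * Real.sqrt a := by
      rw [hA, Real.sqrt_eq_rpow, ← Real.rpow_add ha0, ha]
      ring_nf
    rw [h1]
    exact mul_le_mul_of_nonneg_right (rpow_add_one_le hu0) (Real.sqrt_nonneg _)
  have hBle : B ≤ Real.exp 1 * v ^ (v:ℝ) * Real.sqrt b := by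
    have h1 : B = (v+1) ^ (v:ℝ) * Real.sqrt b := by
      rw [hB, Real.sqrt_eq_rpow, ← Real.rpow_add hb0, hb']
      ring_nf
    rw [h1]
    exact mul_le_mul_of_nonneg_right (rpow_add_one_le hv0) (Real.sqrt_nonneg _)
  have hCge : w ^ (w:ℝ) * w ^ ((3:ℝ)/2) ≤ C := by
    rw [hC, hab, ← Real.rpow_add hw0]
    rw [show w + 2 - 1/2 = w + 3/2 by ring]
    exact Real.rpow_le_rpow hw0.le (by linarith) (by linarith)
  have hsqa : Real.sqrt a ≤ Real.sqrt 2 * Real.sqrt L := by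
    rw [← Real.sqrt_mul (by norm_num)]
    apply Real.sqrt_le_sqrt
    rw [ha, hu]
    have := mul_le_mul_of_nonneg_right beta_le hL0.le
    linarith
  have hsqb : Real.sqrt b ≤ Real.sqrt 2 * Real.sqrt K := by
    rw [← Real.sqrt_mul (by norm_num)]
    apply Real.sqrt_le_sqrt
    rw [hb', hv]
    have := mul_le_mul_of_nonneg_right beta_le hK0.le
    linarith
  have step2 : A * B / C ≤ Real.exp 2 * (u ^ (u:ℝ) * v ^ (v:ℝ))
      * (2 * (Real.sqrt L * Real.sqrt K)) / (w ^ (w:ℝ) * w ^ ((3:ℝ)/2)) := by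
    have hwpos : 0 < w ^ (w:ℝ) * w ^ ((3:ℝ)/2) :=
      mul_pos (Real.rpow_pos_of_pos hw0 _) (Real.rpow_pos_of_pos hw0 _)
    apply div_le_div₀ (by positivity) ?_ hwpos hCge
    calc A * B ≤ (Real.exp 1 * u ^ (u:ℝ) * Real.sqrt a) * (Real.exp 1 * v ^ (v:ℝ) * Real.sqrt b) :=
          mul_le_mul hAle hBle hBpos.le (by positivity)
      _ = (Real.exp 1 * u ^ (u:ℝ)) * (Real.exp 1 * v ^ (v:ℝ))
            * (Real.sqrt a * Real.sqrt b) := by ring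
      _ ≤ (Real.exp 1 * u ^ (u:ℝ)) * (Real.exp 1 * v ^ (v:ℝ))
            * ((Real.sqrt 2 * Real.sqrt L) * (Real.sqrt 2 * Real.sqrt K)) := by
          have hsab : Real.sqrt a * Real.sqrt b
              ≤ (Real.sqrt 2 * Real.sqrt L) * (Real.sqrt 2 * Real.sqrt K) :=
            mul_le_mul hsqa hsqb (Real.sqrt_nonneg _) (by positivity)
          exact mul_le_mul_of_nonneg_left hsab (by positivity)
      _ = Real.exp 2 * (u ^ (u:ℝ) * v ^ (v:ℝ)) * ((Real.sqrt 2 * Real.sqrt 2) * (Real.sqrt L * Real.sqrt K)) := by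
          rw [show Real.exp 2 = Real.exp 1 * Real.exp 1 by rw [← Real.exp_add]; norm_num]
          ring
      _ = Real.exp 2 * (u ^ (u:ℝ) * v ^ (v:ℝ)) * (2 * (Real.sqrt L * Real.sqrt K)) := by
          rw [Real.mul_self_sqrt (by norm_num)]
  -- the β-power identity
  have hQ : u ^ (u:ℝ) * v ^ (v:ℝ) / w ^ (w:ℝ) = (L ^ L * K ^ K / M ^ M) ^ β := by
    have hbb : β ^ (β*L) * β ^ (β*K) = β ^ (β*M) := by
      rw [← Real.rpow_add hb]
      congr 1
      try rw [hM]
      try ring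
    rw [hu, hv, hw]
    rw [Real.mul_rpow hb.le hL0.le, Real.mul_rpow hb.le hK0.le, Real.mul_rpow hb.le hM0.le]
    rw [Real.div_rpow (by positivity) (Real.rpow_nonneg hM0.le _),
        Real.mul_rpow (Real.rpow_nonneg hL0.le _) (Real.rpow_nonneg hK0.le _),
        ← Real.rpow_mul hL0.le, ← Real.rpow_mul hK0.le, ← Real.rpow_mul hM0.le]
    rw [show L * β = β * L by ring, show K * β = β * K by ring, show M * β = β * M by ring]
    rw [← hbb]
    have h1 : β ^ (β*L) ≠ 0 := (Real.rpow_pos_of_pos hb _).ne'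
    have h2 : β ^ (β*K) ≠ 0 := (Real.rpow_pos_of_pos hb _).ne'
    have h3 : M ^ (β*M) ≠ 0 := (Real.rpow_pos_of_pos hM0 _).ne'
    field_simp
  have hQbpos : 0 < (L ^ L * K ^ K / M ^ M) ^ β := by
    apply Real.rpow_pos_of_pos
    have := Real.rpow_pos_of_pos hL0 L
    have := Real.rpow_pos_of_pos hK0 K
    have := Real.rpow_pos_of_pos hM0 M
    positivity
  have hw32 : (1/3) * M ^ ((3:ℝ)/2) ≤ w ^ ((3:ℝ)/2) := by
    rw [hw, Real.mul_rpow hb.le hM0.le]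
    have h1 : ((1:ℝ)/2) ^ ((3:ℝ)/2) ≤ β ^ ((3:ℝ)/2) :=
      Real.rpow_le_rpow (by norm_num) hbg (by norm_num)
    have h2 : (1:ℝ)/3 ≤ ((1:ℝ)/2) ^ ((3:ℝ)/2) := by
      rw [show ((3:ℝ)/2) = 1 + 1/2 by norm_num, Real.rpow_add (by norm_num), Real.rpow_one,
        ← Real.sqrt_eq_rpow]
      have hs := Real.mul_self_sqrt (by norm_num : (0:ℝ) ≤ 1/2)
      nlinarith [Real.sqrt_nonneg (1/2 : ℝ)]
    have h3 : 0 < M ^ ((3:ℝ)/2) := Real.rpow_pos_of_pos hM0 _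
    nlinarith
  have hM32pos : 0 < M ^ ((3:ℝ)/2) := Real.rpow_pos_of_pos hM0 _
  have hw32pos : 0 < w ^ ((3:ℝ)/2) := Real.rpow_pos_of_pos hw0 _
  have hwwpos : 0 < w ^ (w:ℝ) := Real.rpow_pos_of_pos hw0 _
  have hSL := Real.sqrt_nonneg L
  have hSK := Real.sqrt_nonneg K
  calc Bfun a b ≤ 2 * Real.exp 4 * (A * B / C) := step1
    _ ≤ 2 * Real.exp 4 * (Real.exp 2 * (u ^ (u:ℝ) * v ^ (v:ℝ))
          * (2 * (Real.sqrt L * Real.sqrt K)) / (w ^ (w:ℝ) * w ^ ((3:ℝ)/2))) :=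
        mul_le_mul_of_nonneg_left step2 (by positivity)
    _ = 4 * (Real.exp 4 * Real.exp 2)
          * ((u ^ (u:ℝ) * v ^ (v:ℝ) / w ^ (w:ℝ)) * (Real.sqrt L * Real.sqrt K)
            / w ^ ((3:ℝ)/2)) := by
        field_simp
        ring
    _ = 4 * Real.exp 6 * ((L ^ L * K ^ K / M ^ M) ^ β * (Real.sqrt L * Real.sqrt K)
          / w ^ ((3:ℝ)/2)) := by
        rw [hQ, ← Real.exp_add]; norm_num
    _ ≤ 4 * Real.exp 6 * ((L ^ L * K ^ K / M ^ M) ^ β * (Real.sqrt L * Real.sqrt K)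
          / ((1/3) * M ^ ((3:ℝ)/2))) := by
        apply mul_le_mul_of_nonneg_left _ (by positivity)
        apply div_le_div_of_nonneg_left (by positivity) (by positivity) hw32
    _ = 12 * Real.exp 6 * ((L ^ L * K ^ K / M ^ M) ^ β * (Real.sqrt L * Real.sqrt K)
          / M ^ ((3:ℝ)/2)) := by
        field_simp
        ring

/-- There is a constant `A₂ > 0` such that for all `m ≥ 2` and `1 ≤ ℓ ≤ m - 1`,
`C(m,ℓ) B(βℓ+1, β(m-ℓ)+1) ≤ (A₂/m) (ℓ^ℓ (m-ℓ)^{m-ℓ} / m^m)^{β-1}`. -/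
theorem binomial_beta_bound :
    ∃ A₂ : ℝ, 0 < A₂ ∧ ∀ m : ℕ, 2 ≤ m → ∀ ℓ : ℕ, 1 ≤ ℓ → ℓ ≤ m - 1 →
      (m.choose ℓ : ℝ) * Bfun (β * ℓ + 1) (β * ((m - ℓ : ℕ) : ℝ) + 1)
        ≤ (A₂ / m) *
          ((ℓ : ℝ) ^ ℓ * ((m - ℓ : ℕ) : ℝ) ^ (m - ℓ) / (m : ℝ) ^ m) ^ (β - 1) := by
  refine ⟨3 * Real.exp 7, by positivity, ?_⟩
  intro m hm ℓ hl1 hlm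
  set k : ℕ := m - ℓ with hk
  have hk1 : 1 ≤ k := by omega
  have hlk : ℓ + k = m := by omega
  have hlm' : ℓ ≤ m := by omega
  have hL1 : (1:ℝ) ≤ (ℓ:ℝ) := by exact_mod_cast hl1
  have hK1 : (1:ℝ) ≤ (k:ℝ) := by exact_mod_cast hk1
  have hL0 : (0:ℝ) < (ℓ:ℝ) := by linarith
  have hK0 : (0:ℝ) < (k:ℝ) := by linarith
  have hMe : (m:ℝ) = (ℓ:ℝ) + (k:ℝ) := by exact_mod_cast hlk.symm
  have hM0 : (0:ℝ) < (m:ℝ) := by rw [hMe]; linarith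
  have hQpos : (0:ℝ) < (ℓ:ℝ) ^ ℓ * (k:ℝ) ^ k / (m:ℝ) ^ m := by positivity
  -- Beta function bound
  have hBB := Bfun_bound hL1 hK1
  rw [← hMe] at hBB
  rw [Real.rpow_natCast ((ℓ:ℝ)) ℓ, Real.rpow_natCast ((k:ℝ)) k,
    Real.rpow_natCast ((m:ℝ)) m] at hBB
  -- binomial bound
  have hfm := fact_upper m (by omega)
  have hfl := fact_lower ℓ hl1
  have hfk := fact_lower k hk1
  have hchoose : (m.choose ℓ : ℝ) ≤ Real.exp 1 * Real.sqrt m * ((m:ℝ)/Real.exp 1)^m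
      / ((2 * Real.sqrt ℓ * ((ℓ:ℝ)/Real.exp 1)^ℓ) * (2 * Real.sqrt k * ((k:ℝ)/Real.exp 1)^k)) := by
    rw [Nat.cast_choose ℝ hlm', ← hk]
    have hd2 : (0:ℝ) < (2 * Real.sqrt ℓ * ((ℓ:ℝ)/Real.exp 1)^ℓ)
        * (2 * Real.sqrt k * ((k:ℝ)/Real.exp 1)^k) := by positivity
    apply div_le_div₀ (by positivity) hfm hd2
    have h1 : (0:ℝ) < (ℓ ! : ℝ) := by positivity
    have h2 : (0:ℝ) < (k ! : ℝ) := by positivity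
    exact mul_le_mul hfl hfk (by positivity) h1.le
  -- positivity of Bfun
  have hbp := beta_pos
  have ha0 : 0 < β * (ℓ:ℝ) + 1 := by positivity
  have hb0 : 0 < β * (k:ℝ) + 1 := by positivity
  have hBfpos : 0 ≤ Bfun (β * (ℓ:ℝ) + 1) (β * (k:ℝ) + 1) := by
    rw [Bfun_eq ha0 hb0]
    have g1 := Real.Gamma_pos_of_pos ha0
    have g2 := Real.Gamma_pos_of_pos hb0
    have g3 := Real.Gamma_pos_of_pos (show 0 < β * (ℓ:ℝ) + 1 + (β * (k:ℝ) + 1) by positivity)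
    positivity
  have hm32 : (m:ℝ) ^ ((3:ℝ)/2) = (m:ℝ) * Real.sqrt m := by
    rw [show ((3:ℝ)/2) = 1 + 1/2 by norm_num, Real.rpow_add hM0, Real.rpow_one,
      ← Real.sqrt_eq_rpow]
  have hQb : ((ℓ:ℝ) ^ ℓ * (k:ℝ) ^ k / (m:ℝ) ^ m) ^ (β-1)
      = ((ℓ:ℝ) ^ ℓ * (k:ℝ) ^ k / (m:ℝ) ^ m) ^ β / ((ℓ:ℝ) ^ ℓ * (k:ℝ) ^ k / (m:ℝ) ^ m) := by
    rw [Real.rpow_sub hQpos, Real.rpow_one]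
  have hem : Real.exp 1 ^ m = Real.exp 1 ^ ℓ * Real.exp 1 ^ k := by rw [← pow_add, hlk]
  have he7 : Real.exp 7 = Real.exp 1 * Real.exp 6 := by rw [← Real.exp_add]; norm_num
  have hsl : Real.sqrt (ℓ:ℝ) ≠ 0 := (Real.sqrt_pos.2 hL0).ne'
  have hsk : Real.sqrt (k:ℝ) ≠ 0 := (Real.sqrt_pos.2 hK0).ne'
  have hsm : Real.sqrt (m:ℝ) ≠ 0 := (Real.sqrt_pos.2 hM0).ne'
  have hel : Real.exp 1 ^ ℓ ≠ 0 := (pow_pos (Real.exp_pos 1) ℓ).ne'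
  have hek : Real.exp 1 ^ k ≠ 0 := (pow_pos (Real.exp_pos 1) k).ne'
  have hlp : ((ℓ:ℝ)) ^ ℓ ≠ 0 := (pow_pos hL0 ℓ).ne'
  have hkp : ((k:ℝ)) ^ k ≠ 0 := (pow_pos hK0 k).ne'
  have hmp : ((m:ℝ)) ^ m ≠ 0 := (pow_pos hM0 m).ne'
  calc (m.choose ℓ : ℝ) * Bfun (β * (ℓ:ℝ) + 1) (β * (k:ℝ) + 1)
      ≤ (Real.exp 1 * Real.sqrt m * ((m:ℝ)/Real.exp 1)^m
          / ((2 * Real.sqrt ℓ * ((ℓ:ℝ)/Real.exp 1)^ℓ) * (2 * Real.sqrt k * ((k:ℝ)/Real.exp 1)^k)))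
        * (12 * Real.exp 6 * (((ℓ:ℝ) ^ ℓ * (k:ℝ) ^ k / (m:ℝ) ^ m) ^ β
          * (Real.sqrt ℓ * Real.sqrt k) / (m:ℝ) ^ ((3:ℝ)/2))) :=
        mul_le_mul hchoose hBB hBfpos (by positivity)
    _ = 3 * Real.exp 7 / (m:ℝ) * (((ℓ:ℝ) ^ ℓ * (k:ℝ) ^ k / (m:ℝ) ^ m) ^ (β-1)) := by
        rw [hQb, hm32, he7, div_pow, div_pow, div_pow, hem]
        field_simp
        ring
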